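/- (Lagrangian form of the capillary term.) Let n ≥ 2, let X : ℝⁿ → ℝⁿ be a C² diffeomorphism with J(x) = det DX(x) > 0 everywhere, and set A(x) = (DX(x))⁻¹. Let ρ : ℝⁿ → ℝ be C² and k : ℝ → ℝ be C¹, and set ρ̄ = ρ ∘ X. Then for every x ∈ ℝⁿ, ( div[ k(ρ) ∇ρ ⊗ ∇ρ ] )(X(x)) = J(x)⁻¹ div[ k(ρ̄) adj(DX) ( ᵗA ∇ρ̄ ) ⊗ ( ᵗA ∇ρ̄ ) ](x). In particular, if in addition J ≡ 1, then ( div[ k(ρ) ∇ρ ⊗ ∇ρ ] ) ∘ X = div[ k(ρ̄) A ( ᵗA ∇ρ̄ ) ⊗ ( ᵗA ∇ρ̄ ) ]. -/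

import Mathlib

open scoped BigOperators
open MeasureTheory

/-- Partial derivative `∂ᵢ f` of a scalar function at a point `x`. -/
noncomputable def pd {n : ℕ} (i : Fin n) (f : (Fin n → ℝ) → ℝ) (x : Fin n → ℝ) : ℝ :=
  fderiv ℝ f x (Pi.single i 1)

/-- Gradient of a scalar function. -/
noncomputable def grad {n : ℕ} (f : (Fin n → ℝ) → ℝ) (x : Fin n → ℝ) : Fin n → ℝ :=
  fun i => pd i f x

/-- Laplacian of a scalar function. -/
noncomputable def lap {n : ℕ} (f : (Fin n → ℝ) → ℝ) (x : Fin n → ℝ) : ℝ :=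
  ∑ i, pd i (pd i f) x

/-- Squared euclidean norm of the gradient, `|∇f|² = ∑ᵢ (∂ᵢf)²`. -/
noncomputable def gradNormSq {n : ℕ} (f : (Fin n → ℝ) → ℝ) (x : Fin n → ℝ) : ℝ :=
  ∑ i, (pd i f x) ^ 2

/-- Divergence of a matrix-valued field: `(matDiv M x)ᵢ = ∑ⱼ ∂ⱼ Mⱼᵢ`. -/
noncomputable def matDiv {n : ℕ} (M : (Fin n → ℝ) → Matrix (Fin n) (Fin n) ℝ)
    (x : Fin n → ℝ) : Fin n → ℝ :=
  fun i => ∑ j, pd j (fun y => M y j i) x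

/-- Divergence of a vector field: `vecDiv F x = ∑ᵢ ∂ᵢ Fᵢ`. -/
noncomputable def vecDiv {n : ℕ} (F : (Fin n → ℝ) → (Fin n → ℝ)) (x : Fin n → ℝ) : ℝ :=
  ∑ i, pd i (fun y => F y i) x

/-- Jacobian matrix of a vector field: `(jacM F x)ᵢⱼ = ∂ⱼ Fᵢ`. -/
noncomputable def jacM {n : ℕ} (F : (Fin n → ℝ) → (Fin n → ℝ)) (x : Fin n → ℝ) :
    Matrix (Fin n) (Fin n) ℝ :=
  Matrix.of fun i j => pd j (fun y => F y i) x


variable {n : ℕ}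

lemma pd_eq_of_hasFDerivAt {f : (Fin n → ℝ) → ℝ} {L : (Fin n → ℝ) →L[ℝ] ℝ} {x : Fin n → ℝ}
    (h : HasFDerivAt f L x) (i : Fin n) : pd i f x = L (Pi.single i 1) := by
  rw [pd, h.fderiv]

lemma clm_apply_eq_sum (L : (Fin n → ℝ) →L[ℝ] ℝ) (w : Fin n → ℝ) :
    L w = ∑ l, w l * L (Pi.single l 1) := by
  conv_lhs => rw [pi_eq_sum_univ w]
  rw [map_sum]
  refine Finset.sum_congr rfl fun l _ => ?_
  rw [_root_.map_smul, smul_eq_mul]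
  congr 2
  ext j
  simp [Pi.single_apply, eq_comm]

lemma pd_comm {f : (Fin n → ℝ) → ℝ} (hf : ContDiff ℝ 2 f) (j m : Fin n) (x : Fin n → ℝ) :
    pd j (fun y => pd m f y) x = pd m (fun y => pd j f y) x := by
  have hd : DifferentiableAt ℝ (fderiv ℝ f) x :=
    ((hf.fderiv_right (m := 1) (by norm_num)).differentiable one_ne_zero) x
  have hsym := (hf.contDiffAt (x := x)).isSymmSndFDerivAt (by norm_num)
  have key : ∀ v w : Fin n → ℝ,
      fderiv ℝ (fun y => fderiv ℝ f y v) x w = fderiv ℝ (fderiv ℝ f) x w v := by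
    intro v w
    have h1 : HasFDerivAt (fun y => fderiv ℝ f y v)
        ((ContinuousLinearMap.apply ℝ ℝ v).comp (fderiv ℝ (fderiv ℝ f) x)) x :=
      (ContinuousLinearMap.apply ℝ ℝ v).hasFDerivAt.comp x hd.hasFDerivAt
    rw [h1.fderiv]; rfl
  simp only [pd]
  rw [key, key, hsym]
lemma pd_sum {ι : Type*} {s : Finset ι} {f : ι → (Fin n → ℝ) → ℝ} {x : Fin n → ℝ}
    (h : ∀ c ∈ s, DifferentiableAt ℝ (f c) x) (j : Fin n) :
    pd j (fun y => ∑ c ∈ s, f c y) x = ∑ c ∈ s, pd j (f c) x := by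
  simp only [pd]
  rw [fderiv_fun_sum h]
  simp

lemma pd_mul {f g : (Fin n → ℝ) → ℝ} {x : Fin n → ℝ} (hf : DifferentiableAt ℝ f x)
    (hg : DifferentiableAt ℝ g x) (j : Fin n) :
    pd j (fun y => f y * g y) x = pd j f x * g x + f x * pd j g x := by
  simp only [pd]
  rw [fderiv_fun_mul hf hg]
  simp only [ContinuousLinearMap.add_apply, ContinuousLinearMap.smul_apply, smul_eq_mul]
  ring

lemma pd_const_mul {f : (Fin n → ℝ) → ℝ} {x : Fin n → ℝ} (hf : DifferentiableAt ℝ f x)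
    (c : ℝ) (j : Fin n) :
    pd j (fun y => c * f y) x = c * pd j f x := by
  simp only [pd]
  rw [fderiv_const_mul hf]
  simp

lemma pd_prod {ι : Type*} [DecidableEq ι] {s : Finset ι} {f : ι → (Fin n → ℝ) → ℝ}
    {x : Fin n → ℝ} (h : ∀ c ∈ s, DifferentiableAt ℝ (f c) x) (j : Fin n) :
    pd j (fun y => ∏ c ∈ s, f c y) x
      = ∑ c ∈ s, (∏ b ∈ s.erase c, f b x) * pd j (f c) x := by
  have H := HasFDerivAt.finset_prod (u := s) (g := f) (g' := fun c => fderiv ℝ (f c) x)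
    (x := x) (fun c hc => (h c hc).hasFDerivAt)
  have := H.fderiv
  simp only [pd]
  rw [this]
  simp [smul_eq_mul]

lemma diffAt_prod {ι : Type*} [DecidableEq ι] {s : Finset ι} {f : ι → (Fin n → ℝ) → ℝ}
    {x : Fin n → ℝ} (h : ∀ c ∈ s, DifferentiableAt ℝ (f c) x) :
    DifferentiableAt ℝ (fun y => ∏ c ∈ s, f c y) x :=
  (HasFDerivAt.finset_prod (fun c hc => (h c hc).hasFDerivAt)).differentiableAt

/-- chain rule -/
lemma pd_comp {f : (Fin n → ℝ) → ℝ} {X : (Fin n → ℝ) → (Fin n → ℝ)} {x : Fin n → ℝ}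
    (hf : DifferentiableAt ℝ f (X x)) (hX : DifferentiableAt ℝ X x) (j : Fin n) :
    pd j (fun y => f (X y)) x = ∑ l, pd l f (X x) * pd j (fun y => X y l) x := by
  have hc : HasFDerivAt (fun y => f (X y))
      ((fderiv ℝ f (X x)).comp (fderiv ℝ X x)) x :=
    hf.hasFDerivAt.comp x hX.hasFDerivAt
  rw [pd, hc.fderiv, ContinuousLinearMap.comp_apply,
    clm_apply_eq_sum (fderiv ℝ f (X x)) (fderiv ℝ X x (Pi.single j 1))]
  refine Finset.sum_congr rfl fun l _ => ?_
  have hl : HasFDerivAt (fun y => X y l)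
      ((ContinuousLinearMap.proj l).comp (fderiv ℝ X x)) x :=
    hasFDerivAt_pi'.1 hX.hasFDerivAt l
  rw [pd, pd, hl.fderiv]
  exact mul_comm _ _

/-- pd of a C² function is C¹ -/
lemma contDiff_pd {f : (Fin n → ℝ) → ℝ} (hf : ContDiff ℝ 2 f) (i : Fin n) :
    ContDiff ℝ 1 (fun x => pd i f x) := by
  simp only [pd]
  exact (hf.fderiv_right (m := 1) (by norm_num)).clm_apply contDiff_const
lemma adj_entry (X : (Fin n → ℝ) → (Fin n → ℝ)) (y : Fin n → ℝ) (j c : Fin n) :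
    Matrix.adjugate (jacM X y) j c
      = ∑ σ : Equiv.Perm (Fin n),
          (if σ j = c then ((Equiv.Perm.sign σ : ℤ) : ℝ) else 0) *
            ∏ a ∈ Finset.univ.erase j, pd a (fun z => X z (σ a)) y := by
  rw [Matrix.adjugate_apply, Matrix.det_apply']
  refine Finset.sum_congr rfl fun σ _ => ?_
  by_cases h : σ j = c
  · rw [if_pos h]
    congr 1
    rw [← Finset.mul_prod_erase Finset.univ _ (Finset.mem_univ j)]
    have h1 : Matrix.updateRow (jacM X y) c (Pi.single j 1) (σ j) j = 1 := by
      rw [h, Matrix.updateRow_self]; simp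
    rw [h1, one_mul]
    refine Finset.prod_congr rfl fun a ha => ?_
    have haj : a ≠ j := (Finset.mem_erase.1 ha).1
    have : σ a ≠ c := fun hc => haj (σ.injective (hc.trans h.symm))
    rw [Matrix.updateRow_apply, if_neg this]
    rfl
  · rw [if_neg h, zero_mul]
    have h2 : σ (σ.symm c) = c := σ.apply_symm_apply c
    have h3 : σ.symm c ≠ j := fun hh => h (by rw [← hh, h2])
    have hz : ∏ i, Matrix.updateRow (jacM X y) c (Pi.single j 1) (σ i) i = 0 :=
      Finset.prod_eq_zero (Finset.mem_univ (σ.symm c))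
        (by rw [Matrix.updateRow_apply, if_pos h2, Pi.single_eq_of_ne h3])
    rw [hz, mul_zero]

section Piola
variable {X : (Fin n → ℝ) → (Fin n → ℝ)} (hX : ContDiff ℝ 2 X)

include hX in
lemma comp_c2 (r : Fin n) : ContDiff ℝ 2 (fun z => X z r) := by
  have := contDiff_pi.1 hX r
  exact this

include hX in
lemma entry_c1 (a r : Fin n) : ContDiff ℝ 1 (fun y => pd a (fun z => X z r) y) :=
  contDiff_pd (comp_c2 hX r) a

include hX in
lemma piola (c : Fin n) (x : Fin n → ℝ) :
    ∑ j, pd j (fun y => Matrix.adjugate (jacM X y) j c) x = 0 := by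
  classical
  have hBd : ∀ (a r : Fin n) (y : Fin n → ℝ),
      DifferentiableAt ℝ (fun y => pd a (fun z => X z r) y) y := fun a r y =>
    ((entry_c1 hX a r).differentiable one_ne_zero) y
  -- rewrite each summand using adj_entry and push pd inside
  have step1 : ∀ j, pd j (fun y => Matrix.adjugate (jacM X y) j c) x
      = ∑ σ : Equiv.Perm (Fin n),
          (if σ j = c then ((Equiv.Perm.sign σ : ℤ) : ℝ) else 0) *
            ∑ m ∈ Finset.univ.erase j,
              (∏ b ∈ (Finset.univ.erase j).erase m, pd b (fun z => X z (σ b)) x) *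
                pd j (fun y => pd m (fun z => X z (σ m)) y) x := by
    intro j
    have hfe : (fun y => Matrix.adjugate (jacM X y) j c)
        = fun y => ∑ σ : Equiv.Perm (Fin n),
            (if σ j = c then ((Equiv.Perm.sign σ : ℤ) : ℝ) else 0) *
              ∏ a ∈ Finset.univ.erase j, pd a (fun z => X z (σ a)) y :=
      funext fun y => adj_entry X y j c
    rw [hfe, pd_sum (fun σ _ => DifferentiableAt.const_mul
      (diffAt_prod fun a _ => hBd a (σ a) x) _) j]
    refine Finset.sum_congr rfl fun σ _ => ?_
    rw [pd_const_mul (diffAt_prod fun a _ => hBd a (σ a) x) _ j,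
      pd_prod (fun a _ => hBd a (σ a) x) j]
  simp only [step1]
  rw [Finset.sum_comm]
  -- collapse the j-sum using the indicator
  have step2 : ∀ σ : Equiv.Perm (Fin n),
      (∑ j, (if σ j = c then ((Equiv.Perm.sign σ : ℤ) : ℝ) else 0) *
        ∑ m ∈ Finset.univ.erase j,
          (∏ b ∈ (Finset.univ.erase j).erase m, pd b (fun z => X z (σ b)) x) *
            pd j (fun y => pd m (fun z => X z (σ m)) y) x)
      = ∑ m ∈ Finset.univ.erase (σ.symm c),
          ((Equiv.Perm.sign σ : ℤ) : ℝ) *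
          ((∏ b ∈ (Finset.univ.erase (σ.symm c)).erase m, pd b (fun z => X z (σ b)) x) *
            pd (σ.symm c) (fun y => pd m (fun z => X z (σ m)) y) x) := by
    intro σ
    rw [← Finset.mul_sum]
    have : ∀ j : Fin n, (σ j = c) = (j = σ.symm c) := fun j => by
      simp [Equiv.apply_eq_iff_eq_symm_apply]
    simp only [this, ite_mul, zero_mul]
    rw [Finset.sum_ite_eq' Finset.univ (σ.symm c)]
    simp [Finset.mul_sum]
  simp only [step2]
  rw [Finset.sum_sigma']
  refine Finset.sum_involution
    (fun p _ => ⟨p.1 * Equiv.swap (p.1.symm c) p.2, p.1.symm c⟩) ?_ ?_ ?_ ?_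
  · -- f p + f (g p) = 0
    rintro ⟨σ, m⟩ hp
    have hm : m ≠ σ.symm c := (Finset.mem_erase.1 (Finset.mem_sigma.1 hp).2).1
    set j := σ.symm c with hj
    have hjm : j ≠ m := fun h => hm h.symm
    have hτm : (σ * Equiv.swap j m) m = c := by
      simp only [Equiv.Perm.mul_apply, Equiv.swap_apply_right, hj]
      exact σ.apply_symm_apply c
    have hτsymm : (σ * Equiv.swap j m).symm c = m := by
      rw [Equiv.symm_apply_eq]; exact hτm.symm
    have hτj : (σ * Equiv.swap j m) j = σ m := by
      simp [Equiv.Perm.mul_apply, Equiv.swap_apply_left]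
    have hsgn : ((Equiv.Perm.sign (σ * Equiv.swap j m) : ℤ) : ℝ)
        = -((Equiv.Perm.sign σ : ℤ) : ℝ) := by
      rw [Equiv.Perm.sign_mul, Equiv.Perm.sign_swap hjm]
      push_cast
      ring
    have hprod : ∏ b ∈ (Finset.univ.erase m).erase j,
          pd b (fun z => X z ((σ * Equiv.swap j m) b)) x
        = ∏ b ∈ (Finset.univ.erase j).erase m, pd b (fun z => X z (σ b)) x := by
      rw [Finset.erase_right_comm]
      refine Finset.prod_congr rfl fun b hb => ?_
      have hbm : b ≠ m := (Finset.mem_erase.1 hb).1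
      have hbj : b ≠ j := (Finset.mem_erase.1 (Finset.mem_erase.1 hb).2).1
      rw [show (σ * Equiv.swap j m) b = σ b by
        simp [Equiv.Perm.mul_apply, Equiv.swap_apply_of_ne_of_ne hbj hbm]]
    have hD := pd_comm (comp_c2 hX (σ m)) m j x
    simp only [hτsymm, hτj, hsgn, hprod, hD]
    ring
  · rintro ⟨σ, m⟩ hp hne heq
    have hm : m ≠ σ.symm c := (Finset.mem_erase.1 (Finset.mem_sigma.1 hp).2).1
    have := congrArg Sigma.snd heq
    exact hm this.symm
  · rintro ⟨σ, m⟩ hp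
    have hm : m ≠ σ.symm c := (Finset.mem_erase.1 (Finset.mem_sigma.1 hp).2).1
    refine Finset.mem_sigma.2 ⟨Finset.mem_univ _, Finset.mem_erase.2 ⟨?_, Finset.mem_univ _⟩⟩
    -- σ.symm c ≠ (σ * swap (σ.symm c) m).symm c  (which equals m)
    have hsm : (σ * Equiv.swap (σ.symm c) m).symm c = m := by
      rw [Equiv.symm_apply_eq]
      simp [Equiv.Perm.mul_apply, Equiv.swap_apply_right]
    rw [hsm]
    exact fun h => hm h.symm
  · rintro ⟨σ, m⟩ hp
    have hm : m ≠ σ.symm c := (Finset.mem_erase.1 (Finset.mem_sigma.1 hp).2).1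
    have hsm : (σ * Equiv.swap (σ.symm c) m).symm c = m := by
      rw [Equiv.symm_apply_eq]
      simp [Equiv.Perm.mul_apply, Equiv.swap_apply_right]
    simp only [hsm]
    congr 1
    rw [Equiv.swap_comm, mul_assoc, Equiv.swap_mul_self, mul_one]
end Piola

section Pullback
variable {X : (Fin n → ℝ) → (Fin n → ℝ)} {ρ : (Fin n → ℝ) → ℝ}

lemma pullback_grad (hX : ContDiff ℝ 2 X) (hρ : ContDiff ℝ 2 ρ)
    (hJ' : ∀ y, (jacM X y).det ≠ 0) (y : Fin n → ℝ) :
    Matrix.mulVec (Matrix.transpose ((jacM X y)⁻¹)) (fun a => pd a (fun z => ρ (X z)) y)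
      = fun a => pd a ρ (X y) := by
  have hXd : Differentiable ℝ X := hX.differentiable (by norm_num)
  have hρd : Differentiable ℝ ρ := hρ.differentiable (by norm_num)
  have hBv : Matrix.mulVec (Matrix.transpose (jacM X y)) (fun a => pd a ρ (X y))
      = fun a => pd a (fun z => ρ (X z)) y := by
    funext a
    rw [pd_comp (hρd _) (hXd y) a]
    simp only [Matrix.mulVec, dotProduct, Matrix.transpose_apply]
    refine Finset.sum_congr rfl fun l _ => ?_
    rw [mul_comm]
    rfl
  rw [← hBv, Matrix.mulVec_mulVec, Matrix.transpose_nonsing_inv,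
    Matrix.nonsing_inv_mul _ (by rw [Matrix.det_transpose]; exact isUnit_iff_ne_zero.2 (hJ' y)),
    Matrix.one_mulVec]

lemma diffAt_adj (hX : ContDiff ℝ 2 X) (j c : Fin n) (x : Fin n → ℝ) :
    DifferentiableAt ℝ (fun y => Matrix.adjugate (jacM X y) j c) x := by
  have hfe : (fun y => Matrix.adjugate (jacM X y) j c)
      = fun y => ∑ σ : Equiv.Perm (Fin n),
          (if σ j = c then ((Equiv.Perm.sign σ : ℤ) : ℝ) else 0) *
            ∏ a ∈ Finset.univ.erase j, pd a (fun z => X z (σ a)) y :=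
    funext fun y => adj_entry X y j c
  rw [hfe]
  exact DifferentiableAt.fun_sum fun σ _ => DifferentiableAt.const_mul
    (diffAt_prod fun a _ => ((entry_c1 hX a (σ a)).differentiable one_ne_zero) x) _
end Pullback

lemma sum_algebra {A adjA g : Fin n → Fin n → ℝ} {d : ℝ}
    (h : ∀ l c, ∑ j, A l j * adjA j c = d * (if l = c then 1 else 0)) :
    ∑ j, ∑ c, adjA j c * (∑ l, g c l * A l j) = d * ∑ c, g c c := by
  have h1 : ∀ j c : Fin n, adjA j c * (∑ l, g c l * A l j)
      = ∑ l, g c l * (A l j * adjA j c) := by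
    intro j c
    rw [Finset.mul_sum]
    exact Finset.sum_congr rfl fun l _ => by ring
  simp only [h1]
  rw [Finset.sum_comm]
  have h2 : ∀ c : Fin n, ∑ j, ∑ l, g c l * (A l j * adjA j c)
      = ∑ l, g c l * ∑ j, A l j * adjA j c := by
    intro c
    rw [Finset.sum_comm]
    exact Finset.sum_congr rfl fun l _ => (Finset.mul_sum _ _ _).symm
  simp only [h2, h]
  have h3 : ∀ c : Fin n, ∑ l, g c l * (d * if l = c then 1 else 0) = g c c * d := by
    intro c
    simp only [mul_ite, mul_one, mul_zero, Finset.sum_ite_eq', Finset.mem_univ, if_true]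
  simp only [h3]
  rw [Finset.mul_sum]
  exact Finset.sum_congr rfl fun c _ => mul_comm _ _

section Key
variable {X : (Fin n → ℝ) → (Fin n → ℝ)} {ρ : (Fin n → ℝ) → ℝ} {k : ℝ → ℝ}

lemma key_div (hX : ContDiff ℝ 2 X) (hρ : ContDiff ℝ 2 ρ) (hk : ContDiff ℝ 1 k)
    (x : Fin n → ℝ) (i : Fin n) :
    ∑ j, pd j (fun y => ∑ c, Matrix.adjugate (jacM X y) j c *
        (k (ρ (X y)) * pd c ρ (X y) * pd i ρ (X y))) x
      = (jacM X x).det * ∑ c, pd c (fun z => k (ρ z) * pd c ρ z * pd i ρ z) (X x) := by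
  have hXd : Differentiable ℝ X := hX.differentiable (by norm_num)
  have hM1 : ∀ c : Fin n, ContDiff ℝ 1 (fun z => k (ρ z) * pd c ρ z * pd i ρ z) := fun c =>
    ((hk.comp (hρ.of_le (by norm_num))).mul (contDiff_pd hρ c)).mul (contDiff_pd hρ i)
  have hMd : ∀ (c : Fin n) (z : Fin n → ℝ),
      DifferentiableAt ℝ (fun z => k (ρ z) * pd c ρ z * pd i ρ z) z := fun c z =>
    ((hM1 c).differentiable one_ne_zero) z
  have hMX : ∀ c : Fin n,
      DifferentiableAt ℝ (fun y => k (ρ (X y)) * pd c ρ (X y) * pd i ρ (X y)) x :=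
    fun c => (hMd c (X x)).comp x (hXd x)
  have e1 : ∀ j, pd j (fun y => ∑ c, Matrix.adjugate (jacM X y) j c *
        (k (ρ (X y)) * pd c ρ (X y) * pd i ρ (X y))) x
      = ∑ c, (pd j (fun y => Matrix.adjugate (jacM X y) j c) x *
            (k (ρ (X x)) * pd c ρ (X x) * pd i ρ (X x))
          + Matrix.adjugate (jacM X x) j c *
            pd j (fun y => k (ρ (X y)) * pd c ρ (X y) * pd i ρ (X y)) x) := by
    intro j
    rw [pd_sum (fun c _ => (diffAt_adj hX j c x).fun_mul (hMX c)) j]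
    exact Finset.sum_congr rfl fun c _ => pd_mul (diffAt_adj hX j c x) (hMX c) j
  simp only [e1, Finset.sum_add_distrib]
  have hfirst : ∑ j, ∑ c, pd j (fun y => Matrix.adjugate (jacM X y) j c) x *
      (k (ρ (X x)) * pd c ρ (X x) * pd i ρ (X x)) = 0 := by
    rw [Finset.sum_comm]
    refine Finset.sum_eq_zero fun c _ => ?_
    rw [← Finset.sum_mul, piola hX c x, zero_mul]
  rw [hfirst, zero_add]
  have e2 : ∀ j c, pd j (fun y => k (ρ (X y)) * pd c ρ (X y) * pd i ρ (X y)) x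
      = ∑ l, pd l (fun z => k (ρ z) * pd c ρ z * pd i ρ z) (X x) * jacM X x l j := by
    intro j c
    exact pd_comp (hMd c (X x)) (hXd x) j
  simp only [e2]
  exact sum_algebra (g := fun c l => pd l (fun z => k (ρ z) * pd c ρ z * pd i ρ z) (X x))
    (A := fun l j => jacM X x l j) (adjA := fun j c => Matrix.adjugate (jacM X x) j c)
    (fun l c => by
      rw [show (∑ j, jacM X x l j * Matrix.adjugate (jacM X x) j c)
          = (jacM X x * Matrix.adjugate (jacM X x)) l c from (Matrix.mul_apply).symm,
        Matrix.mul_adjugate]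
      simp [Matrix.smul_apply, Matrix.one_apply, smul_eq_mul])
end Key


/-- Lagrangian form of the capillary term: for a C² diffeomorphism
`X` with positive Jacobian `J`, `A = (DX)⁻¹`, `ρ̄ = ρ ∘ X`,
`(div[k(ρ)∇ρ⊗∇ρ])(X x) = J⁻¹ div[k(ρ̄) adj(DX) (ᵗA∇ρ̄)⊗(ᵗA∇ρ̄)](x)`;
if moreover `J ≡ 1` then
`(div[k(ρ)∇ρ⊗∇ρ]) ∘ X = div[k(ρ̄) A (ᵗA∇ρ̄)⊗(ᵗA∇ρ̄)]`. -/
theorem capillary_term_lagrangian {n : ℕ} (hn : 2 ≤ n)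
    (e : (Fin n → ℝ) ≃ (Fin n → ℝ))
    (hX : ContDiff ℝ 2 ⇑e) (hXinv : ContDiff ℝ 2 ⇑e.symm)
    (hJ : ∀ x, 0 < (jacM (⇑e) x).det)
    (ρ : (Fin n → ℝ) → ℝ) (hρ : ContDiff ℝ 2 ρ)
    (k : ℝ → ℝ) (hk : ContDiff ℝ 1 k) :
    (∀ x : Fin n → ℝ, ∀ i : Fin n,
      matDiv (fun z => Matrix.of fun a b => k (ρ z) * pd a ρ z * pd b ρ z) (e x) i
        = ((jacM (⇑e) x).det)⁻¹ *
            ∑ j, pd j (fun y => k (ρ (e y)) *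
              ((jacM (⇑e) y).adjugate *
                Matrix.vecMulVec
                  (Matrix.mulVec (Matrix.transpose ((jacM (⇑e) y)⁻¹))
                    (fun a => pd a (fun z => ρ (e z)) y))
                  (Matrix.mulVec (Matrix.transpose ((jacM (⇑e) y)⁻¹))
                    (fun a => pd a (fun z => ρ (e z)) y))) j i) x)
    ∧ ((∀ y, (jacM (⇑e) y).det = 1) →
        ∀ x : Fin n → ℝ, ∀ i : Fin n,
        matDiv (fun z => Matrix.of fun a b => k (ρ z) * pd a ρ z * pd b ρ z) (e x) i
          = ∑ j, pd j (fun y => k (ρ (e y)) *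
              ((jacM (⇑e) y)⁻¹ *
                Matrix.vecMulVec
                  (Matrix.mulVec (Matrix.transpose ((jacM (⇑e) y)⁻¹))
                    (fun a => pd a (fun z => ρ (e z)) y))
                  (Matrix.mulVec (Matrix.transpose ((jacM (⇑e) y)⁻¹))
                    (fun a => pd a (fun z => ρ (e z)) y))) j i) x) := by
  classical
  have hdet : ∀ y, (jacM (⇑e) y).det ≠ 0 := fun y => (hJ y).ne'
  have hGfun : ∀ (x : Fin n → ℝ) (j i : Fin n),
      (fun y => k (ρ (e y)) *
          ((jacM (⇑e) y).adjugate *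
            Matrix.vecMulVec
              (Matrix.mulVec (Matrix.transpose ((jacM (⇑e) y)⁻¹))
                (fun a => pd a (fun z => ρ (e z)) y))
              (Matrix.mulVec (Matrix.transpose ((jacM (⇑e) y)⁻¹))
                (fun a => pd a (fun z => ρ (e z)) y))) j i)
        = fun y => ∑ c, Matrix.adjugate (jacM (⇑e) y) j c *
            (k (ρ (e y)) * pd c ρ (e y) * pd i ρ (e y)) := by
    intro x j i
    funext y
    rw [pullback_grad hX hρ hdet y, Matrix.mul_apply, Finset.mul_sum]
    exact Finset.sum_congr rfl fun c _ => by rw [Matrix.vecMulVec_apply]; ring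
  have hmatDiv : ∀ (x : Fin n → ℝ) (i : Fin n),
      matDiv (fun z => Matrix.of fun a b => k (ρ z) * pd a ρ z * pd b ρ z) (e x) i
        = ∑ c, pd c (fun z => k (ρ z) * pd c ρ z * pd i ρ z) (e x) := fun x i => rfl
  have part1 : ∀ x : Fin n → ℝ, ∀ i : Fin n,
      matDiv (fun z => Matrix.of fun a b => k (ρ z) * pd a ρ z * pd b ρ z) (e x) i
        = ((jacM (⇑e) x).det)⁻¹ *
            ∑ j, pd j (fun y => k (ρ (e y)) *
              ((jacM (⇑e) y).adjugate *
                Matrix.vecMulVec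
                  (Matrix.mulVec (Matrix.transpose ((jacM (⇑e) y)⁻¹))
                    (fun a => pd a (fun z => ρ (e z)) y))
                  (Matrix.mulVec (Matrix.transpose ((jacM (⇑e) y)⁻¹))
                    (fun a => pd a (fun z => ρ (e z)) y))) j i) x := by
    intro x i
    have h1 : ∑ j, pd j (fun y => k (ρ (e y)) *
              ((jacM (⇑e) y).adjugate *
                Matrix.vecMulVec
                  (Matrix.mulVec (Matrix.transpose ((jacM (⇑e) y)⁻¹))
                    (fun a => pd a (fun z => ρ (e z)) y))
                  (Matrix.mulVec (Matrix.transpose ((jacM (⇑e) y)⁻¹))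
                    (fun a => pd a (fun z => ρ (e z)) y))) j i) x
        = (jacM (⇑e) x).det *
            matDiv (fun z => Matrix.of fun a b => k (ρ z) * pd a ρ z * pd b ρ z) (e x) i := by
      rw [hmatDiv]
      rw [show (∑ j, pd j (fun y => k (ρ (e y)) *
              ((jacM (⇑e) y).adjugate *
                Matrix.vecMulVec
                  (Matrix.mulVec (Matrix.transpose ((jacM (⇑e) y)⁻¹))
                    (fun a => pd a (fun z => ρ (e z)) y))
                  (Matrix.mulVec (Matrix.transpose ((jacM (⇑e) y)⁻¹))
                    (fun a => pd a (fun z => ρ (e z)) y))) j i) x)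
          = ∑ j, pd j (fun y => ∑ c, Matrix.adjugate (jacM (⇑e) y) j c *
              (k (ρ (e y)) * pd c ρ (e y) * pd i ρ (e y))) x from
        Finset.sum_congr rfl fun j _ => by rw [hGfun x j i]]
      exact key_div hX hρ hk x i
    rw [h1, inv_mul_cancel_left₀ (hdet x)]
  refine ⟨part1, fun hdet1 x i => ?_⟩
  have hinv : ∀ y : Fin n → ℝ, (jacM (⇑e) y)⁻¹ = Matrix.adjugate (jacM (⇑e) y) := fun y => by
    rw [Matrix.inv_def, hdet1 y]
    simp
  have h2 := part1 x i
  rw [hdet1 x, inv_one, one_mul] at h2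
  rw [h2]
  refine Finset.sum_congr rfl fun j _ => ?_
  congr 1
  funext y
  rw [hinv y]
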